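/- Let p be an odd prime, q = p^r, T = T(q). If u, v ∈ T with depths δ(u) = i and δ(v) = j, i > j, and gcd(i, p) = 1, then the commutator [u,v] has depth exactly qj + i. Consequently [T_i, T_j] ≤ T_{qj+i} when all elements of T_i have depth coprime to p exceeding the depths in T_j. -/

import Mathlib

/-- Composition (substitution) of formal power series: `psComp f g = f(g(t))`. -/
noncomputable def psComp {R : Type*} [CommRing R] (f g : PowerSeries R) : PowerSeries R :=
  PowerSeries.mk fun n =>
    ∑ k ∈ Finset.range (n + 1), PowerSeries.coeff (R := R) k f * PowerSeries.coeff (R := R) n (g ^ k)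

/-- Membership in the Fesenko group `T(q)`: power series of the form
`t + Σ_{k≥1} a_{qk+1} t^{qk+1}` over `𝔽_p`. -/
def InT (p q : ℕ) (u : PowerSeries (ZMod p)) : Prop :=
  PowerSeries.coeff (R := ZMod p) 1 u = 1 ∧
  ∀ m : ℕ, m ≠ 1 → (¬ ∃ k, 1 ≤ k ∧ m = q * k + 1) → PowerSeries.coeff (R := ZMod p) m u = 0

/-- `u ∈ T(q)` has depth `k`: the first nonzero coefficient `a_{qk+1}` occurs at index `k`. -/
def HasDepth (p q : ℕ) (u : PowerSeries (ZMod p)) (k : ℕ) : Prop :=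
  1 ≤ k ∧ PowerSeries.coeff (R := ZMod p) (q * k + 1) u ≠ 0 ∧
  ∀ l, 1 ≤ l → l < k → PowerSeries.coeff (R := ZMod p) (q * l + 1) u = 0

open PowerSeries Finset


variable {R : Type*} [CommRing R]

lemma coeff_psComp (f g : PowerSeries R) (n : ℕ) :
    coeff (R := R) n (psComp f g) = ∑ k ∈ Finset.range (n + 1), coeff (R := R) k f * coeff (R := R) n (g ^ k) := by
  simp [psComp]

lemma coeff_pow_lt (g : PowerSeries R) {M : ℕ} (hg : ∀ d, d < M → coeff (R := R) d g = 0) :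
    ∀ k n, n < k * M → coeff (R := R) n (g ^ k) = 0 := by
  intro k
  induction k with
  | zero => intro n hn; omega
  | succ k ih =>
      intro n hn
      rw [pow_succ, PowerSeries.coeff_mul]
      apply Finset.sum_eq_zero
      rintro ⟨c, d⟩ hcd
      rw [Finset.HasAntidiagonal.mem_antidiagonal] at hcd
      rcases lt_or_ge c (k * M) with h | h
      · rw [ih c h, zero_mul]
      · have hn' : (k+1)*M = k*M+M := by ring
        have : d < M := by omega
        rw [hg d this, mul_zero]

lemma coeff_pow_lt_self (g : PowerSeries R) (hg : constantCoeff (R := R) g = 0) {k n : ℕ}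
    (hn : n < k) : coeff (R := R) n (g ^ k) = 0 := by
  have := coeff_pow_lt g (M := 1) (fun d hd => by
    have : d = 0 := by omega
    simpa [this, ← coeff_zero_eq_constantCoeff] using hg)
  exact this k n (by omega)

lemma psComp_add (f₁ f₂ g : PowerSeries R) :
    psComp (f₁ + f₂) g = psComp f₁ g + psComp f₂ g := by
  ext n
  simp [coeff_psComp, add_mul, Finset.sum_add_distrib]

lemma psComp_X_left (g : PowerSeries R) (hg : constantCoeff (R := R) g = 0) :
    psComp X g = g := by
  ext n
  rw [coeff_psComp]
  rcases Nat.eq_zero_or_pos n with h | h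
  · subst h
    simp [coeff_zero_eq_constantCoeff, hg]
  · rw [Finset.sum_eq_single 1]
    · simp
    · intro k hk hk1
      rw [coeff_X, if_neg hk1, zero_mul]
    · intro h1; exfalso; apply h1; simp; omega

lemma coeff_eval₂ (P : Polynomial R) (g : PowerSeries R) (hg : constantCoeff (R := R) g = 0) (n : ℕ) :
    coeff (R := R) n (Polynomial.eval₂ (C (R := R)) g P) =
      ∑ k ∈ Finset.range (n + 1), P.coeff k * coeff (R := R) n (g ^ k) := by
  rw [Polynomial.eval₂_eq_sum, Polynomial.sum]
  rw [map_sum]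
  simp only [map_mul, coeff_C_mul]  -- coeff of C a * g^k
  rw [← Finset.sum_filter_add_sum_filter_not P.support (· < n + 1)]
  have h2 : ∑ k ∈ P.support.filter (¬ · < n + 1), P.coeff k * coeff (R := R) n (g ^ k) = 0 := by
    apply Finset.sum_eq_zero
    intro k hk
    simp only [Finset.mem_filter, not_lt] at hk
    rw [coeff_pow_lt_self g hg (by omega), mul_zero]
  rw [h2, add_zero]
  apply Finset.sum_subset
  · intro k hk; simp only [Finset.mem_filter, Polynomial.mem_support_iff] at hk
    simp [Finset.mem_range]; omega
  · intro k hk hk'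
    simp only [Finset.mem_range] at hk
    simp only [Finset.mem_filter, Polynomial.mem_support_iff, not_and, not_lt] at hk'
    by_cases hc : P.coeff k = 0
    · rw [hc, zero_mul]
    · exact absurd hk (not_lt.mpr (hk' hc))

lemma coeff_psComp_eq_eval₂ (f g : PowerSeries R) (hg : constantCoeff (R := R) g = 0) (n N : ℕ)
    (hN : n < N) :
    coeff (R := R) n (psComp f g) = coeff (R := R) n (Polynomial.eval₂ (C (R := R)) g (trunc N f)) := by
  rw [coeff_psComp, coeff_eval₂ _ _ hg]
  apply Finset.sum_congr rfl
  intro k hk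
  rw [coeff_trunc, if_pos (by simp at hk; omega)]

lemma psComp_mul (f₁ f₂ g : PowerSeries R) (hg : constantCoeff (R := R) g = 0) :
    psComp (f₁ * f₂) g = psComp f₁ g * psComp f₂ g := by
  ext n
  rw [coeff_psComp_eq_eval₂ _ _ hg n (n+1) (by omega), PowerSeries.coeff_mul]
  have hR : ∀ c, c ≤ n → ∀ f : PowerSeries R, coeff (R := R) c (psComp f g)
      = coeff (R := R) c (Polynomial.eval₂ (C (R := R)) g (trunc (n+1) f)) := by
    intro c hc f
    exact coeff_psComp_eq_eval₂ f g hg c (n+1) (by omega)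
  have : ∑ x ∈ Finset.HasAntidiagonal.antidiagonal n, coeff (R := R) x.1 (psComp f₁ g) * coeff (R := R) x.2 (psComp f₂ g)
      = ∑ x ∈ Finset.HasAntidiagonal.antidiagonal n,
          coeff (R := R) x.1 (Polynomial.eval₂ (C (R := R)) g (trunc (n+1) f₁)) *
          coeff (R := R) x.2 (Polynomial.eval₂ (C (R := R)) g (trunc (n+1) f₂)) := by
    apply Finset.sum_congr rfl
    rintro ⟨c, d⟩ hcd
    rw [Finset.HasAntidiagonal.mem_antidiagonal] at hcd
    rw [hR c (by omega) f₁, hR d (by omega) f₂]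
  rw [this, ← PowerSeries.coeff_mul, ← Polynomial.eval₂_mul]
  rw [coeff_eval₂ _ _ hg, coeff_eval₂ _ _ hg]
  apply Finset.sum_congr rfl
  intro k hk
  rw [Finset.mem_range] at hk
  have h1 : (trunc (n+1) (f₁ * f₂)).coeff k
      = (trunc (n+1) f₁ * trunc (n+1) f₂).coeff k := by
    rw [coeff_trunc, if_pos (show k < n+1 by omega), Polynomial.coeff_mul, PowerSeries.coeff_mul]
    apply Finset.sum_congr rfl
    rintro ⟨c, d⟩ hcd
    rw [Finset.HasAntidiagonal.mem_antidiagonal] at hcd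
    rw [coeff_trunc, if_pos (by omega : c < n+1), coeff_trunc, if_pos (by omega : d < n+1)]
  rw [h1]

lemma psComp_one (g : PowerSeries R) : psComp 1 g = 1 := by
  ext n
  rw [coeff_psComp]
  rcases Nat.eq_zero_or_pos n with h | h
  · subst h; simp
  · rw [Finset.sum_eq_single 0]
    · simp [coeff_one]
    · intro k hk hk0
      rw [coeff_one, if_neg hk0, zero_mul]
    · intro h0; exfalso; apply h0; simp
    
lemma psComp_pow (f g : PowerSeries R) (hg : constantCoeff (R := R) g = 0) (m : ℕ) :
    psComp (f ^ m) g = (psComp f g) ^ m := by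
  induction m with
  | zero => simpa using psComp_one g
  | succ m ih => rw [pow_succ, pow_succ, psComp_mul _ _ _ hg, ih]

lemma constantCoeff_psComp (f g : PowerSeries R) :
    constantCoeff (R := R) (psComp f g) = constantCoeff (R := R) f := by
  have h0 := coeff_psComp f g 0
  rw [coeff_zero_eq_constantCoeff] at h0
  rw [h0]
  simp

lemma psComp_assoc (f g h : PowerSeries R) (hg : constantCoeff (R := R) g = 0)
    (hh : constantCoeff (R := R) h = 0) :
    psComp (psComp f g) h = psComp f (psComp g h) := by
  have hgh : constantCoeff (R := R) (psComp g h) = 0 := by rw [constantCoeff_psComp, hg]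
  ext n
  rw [coeff_psComp, coeff_psComp]
  have hL : ∀ k ∈ Finset.range (n+1), coeff (R := R) k (psComp f g) * coeff (R := R) n (h ^ k)
      = ∑ m ∈ Finset.range (n+1), coeff (R := R) m f * (coeff (R := R) k (g ^ m) * coeff (R := R) n (h ^ k)) := by
    intro k hk
    rw [Finset.mem_range] at hk
    rw [coeff_psComp, Finset.sum_mul]
    have hsub : Finset.range (k+1) ⊆ Finset.range (n+1) := Finset.range_subset_range.mpr (by omega)
    rw [Finset.sum_subset hsub (by
      intro m hm hm'
      rw [Finset.mem_range] at hm hm'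
      rw [coeff_pow_lt_self g hg (by omega)]
      simp)]
    apply Finset.sum_congr rfl
    intro m _; ring
  rw [Finset.sum_congr rfl hL, Finset.sum_comm]
  apply Finset.sum_congr rfl
  intro m _
  rw [← Finset.mul_sum]
  congr 1
  rw [← psComp_pow _ _ hh m, coeff_psComp]

section CharP

variable (p : ℕ) [hp : Fact p.Prime] [CharP R p]

lemma psCharP : CharP (PowerSeries R) p := by
  constructor
  intro n
  rw [← map_natCast (C (R := R)) n]
  constructor
  · intro h
    have := congrArg (constantCoeff (R := R)) h
    simp only [constantCoeff_C, map_zero] at this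
    exact (CharP.cast_eq_zero_iff R p n).mp this
  · intro h
    rw [(CharP.cast_eq_zero_iff R p n).mpr h, map_zero]

lemma coeff_pow_char (f : PowerSeries R) (n : ℕ) :
    coeff (R := R) n (f ^ p) = if p ∣ n then (coeff (R := R) (n / p) f) ^ p else 0 := by
  haveI := psCharP (R := R) p
  set P : PowerSeries R := ∑ m ∈ Finset.range (n+1), C (R := R) (coeff (R := R) m f) * X ^ m with hP
  have hPc : ∀ d, d ≤ n → coeff (R := R) d P = coeff (R := R) d f := by
    intro d hd
    rw [hP, map_sum]
    rw [Finset.sum_eq_single d]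
    · simp
    · intro m _ hm
      simp [coeff_X_pow, Ne.symm hm]
    · intro hd'; exfalso; apply hd'; rw [Finset.mem_range]; omega
  have hsplit : f = P + (f - P) := by ring
  have h1 : coeff (R := R) n (f ^ p) = coeff (R := R) n (P ^ p) + coeff (R := R) n ((f - P) ^ p) := by
    conv_lhs => rw [hsplit]
    rw [add_pow_char, map_add]
  have h2 : coeff (R := R) n ((f - P) ^ p) = 0 := by
    apply coeff_pow_lt (M := n + 1)
    · intro d hd
      rw [map_sub, hPc d (by omega), sub_self]
    · have := hp.out.two_le
      calc n < (n+1) * 1 := by omega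
        _ ≤ (n+1) * p := by exact Nat.mul_le_mul_left _ (by omega)
        _ = p * (n+1) := by ring
  have h3 : P ^ p = ∑ m ∈ Finset.range (n+1), C (R := R) ((coeff (R := R) m f) ^ p) * X ^ (m * p) := by
    rw [hP, sum_pow_char]
    apply Finset.sum_congr rfl
    intro m _
    rw [mul_pow, ← map_pow, ← pow_mul]
  rw [h1, h2, add_zero, h3, map_sum]
  by_cases hdvd : p ∣ n
  · rw [if_pos hdvd]
    obtain ⟨t, ht⟩ := hdvd
    have hpp := hp.out.two_le
    have htn : t ≤ n := by nlinarith
    have htdiv : n / p = t := by rw [ht]; exact Nat.mul_div_cancel_left t (by omega)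
    rw [Finset.sum_eq_single t]
    · rw [coeff_C_mul, coeff_X_pow, if_pos (by rw [ht, Nat.mul_comm]), mul_one, htdiv]
    · intro m _ hm
      rw [coeff_C_mul, coeff_X_pow, if_neg ?_, mul_zero]
      intro hc
      apply hm
      have h' : m * p = t * p := by rw [← hc, ht, Nat.mul_comm]
      exact Nat.eq_of_mul_eq_mul_right (by omega) h'
    · intro ht'; exfalso; apply ht'; rw [Finset.mem_range]; omega
  · rw [if_neg hdvd]
    apply Finset.sum_eq_zero
    intro m _
    rw [coeff_C_mul, coeff_X_pow, if_neg (by intro hc; exact hdvd ⟨m, by rw [hc, Nat.mul_comm]⟩), mul_zero]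

lemma coeff_pow_char_pow (f : PowerSeries R) (r n : ℕ) :
    coeff (R := R) n (f ^ p ^ r) = if p ^ r ∣ n then (coeff (R := R) (n / p ^ r) f) ^ p ^ r else 0 := by
  induction r generalizing n with
  | zero => simp
  | succ r ih =>
      have h0 : (0:ℕ) < p := hp.out.pos
      rw [pow_succ, pow_mul, coeff_pow_char p]
      by_cases h1 : p ∣ n
      · rw [if_pos h1, ih (n / p)]
        by_cases h2 : p ^ r ∣ n / p
        · have h3 : p ^ r * p ∣ n := by
            rw [mul_comm]
            exact (Nat.dvd_div_iff_mul_dvd h1).mp h2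
          have h4 : n / p / p ^ r = n / (p ^ r * p) := by
            rw [Nat.div_div_eq_div_mul, mul_comm]
          rw [if_pos h2, if_pos h3, ← pow_mul, h4]
        · have h3 : ¬ p ^ r * p ∣ n := by
            intro hc
            exact h2 ((Nat.dvd_div_iff_mul_dvd h1).mpr (by rwa [mul_comm] at hc))
          rw [if_neg h2, if_neg h3, zero_pow hp.out.ne_zero]
      · rw [if_neg h1, if_neg (fun hc => h1 (dvd_trans (dvd_mul_left p (p ^ r)) hc))]

end CharP

lemma coeff_mul_lt (f g : PowerSeries R) {A B : ℕ}
    (hf : ∀ d, d < A → coeff (R := R) d f = 0) (hg : ∀ d, d < B → coeff (R := R) d g = 0)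
    {n : ℕ} (hn : n < A + B) : coeff (R := R) n (f * g) = 0 := by
  rw [PowerSeries.coeff_mul]
  apply Finset.sum_eq_zero
  rintro ⟨c, d⟩ hcd
  rw [Finset.HasAntidiagonal.mem_antidiagonal] at hcd
  rcases lt_or_ge c A with h | h
  · rw [hf c h, zero_mul]
  · rw [hg d (by omega), mul_zero]

section Star

variable {p : ℕ} [hp : Fact p.Prime]

lemma star (q r : ℕ) (hq : q = p ^ r) (hr : 1 ≤ r)
    (w : PowerSeries (ZMod p)) (M : ℕ) (hM : 1 ≤ M)
    (hw1 : coeff (R := ZMod p) 1 w = 1)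
    (hW : ∀ d, d < q * M + 1 → d ≠ 1 → coeff (R := ZMod p) d w = 0)
    (l n : ℕ) (hl : 1 ≤ l) (hln : q * l + 1 ≤ n) (hn : n ≤ q * l + q * q * M + 1) :
    coeff (R := ZMod p) n (w ^ (q * l + 1)) =
      coeff (R := ZMod p) (n - q * l) w +
        (if n = q * l + q * q * M + 1 then
          (l : ZMod p) * (coeff (R := ZMod p) (q * M + 1) w) ^ q else 0) := by
  have hq2 : 2 ≤ q := by
    rw [hq]
    exact le_trans hp.out.two_le (Nat.le_self_pow (by omega) p)
  have hw0 : coeff (R := ZMod p) 0 w = 0 := hW 0 (by omega) (by omega)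
  set V := w - X with hVdef
  have hVd : ∀ d, d < q * M + 1 → coeff (R := ZMod p) d V = 0 := by
    intro d hd
    rw [hVdef, map_sub]
    by_cases h1 : d = 1
    · subst h1; rw [hw1, coeff_one_X, sub_self]
    · rw [hW d hd h1, coeff_X, if_neg h1, sub_zero]
  have hwXV : w = X + V := by rw [hVdef]; ring
  haveI := psCharP (R := ZMod p) p
  have hwq : w ^ q = X ^ q + V ^ q := by rw [hwXV, hq, add_pow_char_pow]
  have hVq0 : ∀ d, d < q * (q * M + 1) → coeff (R := ZMod p) d (V ^ q) = 0 := by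
    intro d hd
    exact coeff_pow_lt V hVd q d (by omega)
  have hVqc : ∀ d, coeff (R := ZMod p) d (V ^ q)
      = if q ∣ d then (coeff (R := ZMod p) (d / q) V) ^ q else 0 := by
    intro d
    rw [hq]
    exact coeff_pow_char_pow p V r d
  -- the binomial expansion
  have hpow : w ^ (q * l + 1)
      = ∑ k ∈ Finset.range (l + 1),
          X ^ (q * k) * (w * (V ^ q) ^ (l - k)) * C (R := ZMod p) ((l.choose k : ZMod p)) := by
    have h1 : w ^ (q * l + 1) = (w ^ q) ^ l * w := by
      rw [← pow_mul, ← pow_succ]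
    rw [h1, hwq, add_pow, Finset.sum_mul]
    apply Finset.sum_congr rfl
    intro k _
    rw [← map_natCast (C (R := ZMod p)) (l.choose k), ← pow_mul, Nat.mul_comm q k]
    ring
  rw [hpow, map_sum]
  obtain ⟨l', rfl⟩ : ∃ l', l = l' + 1 := ⟨l - 1, by omega⟩
  rw [Finset.sum_range_succ, Finset.sum_range_succ]
  -- the low (k ≤ l' - 1) terms vanish
  have hlow : ∀ k ∈ Finset.range l',
      coeff (R := ZMod p) n (X ^ (q * k) * (w * (V ^ q) ^ (l' + 1 - k))
        * C (R := ZMod p) (((l' + 1).choose k : ZMod p))) = 0 := by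
    intro k hk
    rw [Finset.mem_range] at hk
    rw [mul_assoc, coeff_X_pow_mul']
    split_ifs with hqk
    · rw [coeff_mul_C]
      have hz : coeff (R := ZMod p) (n - q * k) (w * (V ^ q) ^ (l' + 1 - k)) = 0 := by
        apply coeff_mul_lt (A := 1) (B := (l' + 1 - k) * (q * (q * M + 1)))
        · intro d hd
          have : d = 0 := by omega
          rw [this, hw0]
        · intro d hd
          exact coeff_pow_lt (V ^ q) hVq0 (l' + 1 - k) d hd
        · -- n - q*k < 1 + (l'+1-k) * (q * (q*M+1))
          have h2 : 2 ≤ l' + 1 - k := by omega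
          have e1 : q * k + q * (l' + 1 - k) = q * (l' + 1) := by
            rw [← Nat.mul_add]
            congr 1
            omega
          have e5 : (l' + 1 - k) * (q * (q * M + 1)) ≥ 2 * (q * q * M) + q * (l' + 1 - k) := by
            have e2 : (l' + 1 - k) * (q * (q * M + 1))
                = q * q * M * (l' + 1 - k) + q * (l' + 1 - k) := by ring
            have e3 : q * q * M * (l' + 1 - k) ≥ q * q * M * 2 := Nat.mul_le_mul_left _ h2
            omega
          have e4 : 0 < q * q * M :=
            Nat.mul_pos (Nat.mul_pos (by omega) (by omega)) (by omega)
          omega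
      rw [hz, zero_mul]
    · rfl
  rw [Finset.sum_eq_zero hlow, zero_add]
  -- the k = l'+1 term
  have htop : coeff (R := ZMod p) n (X ^ (q * (l' + 1)) * (w * (V ^ q) ^ (l' + 1 - (l' + 1)))
      * C (R := ZMod p) (((l' + 1).choose (l' + 1) : ZMod p))) = coeff (R := ZMod p) (n - q * (l' + 1)) w := by
    rw [Nat.sub_self, pow_zero, mul_one, Nat.choose_self, Nat.cast_one, map_one, mul_one,
      coeff_X_pow_mul', if_pos (by omega)]
  -- the k = l' term
  have hmid : coeff (R := ZMod p) n (X ^ (q * l') * (w * (V ^ q) ^ (l' + 1 - l'))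
      * C (R := ZMod p) (((l' + 1).choose l' : ZMod p)))
      = if n = q * (l' + 1) + q * q * M + 1 then
          ((l' + 1 : ℕ) : ZMod p) * (coeff (R := ZMod p) (q * M + 1) w) ^ q else 0 := by
    have hch : (l' + 1).choose l' = l' + 1 := Nat.choose_succ_self_right l'
    have hql : q * (l' + 1) = q * l' + q := by ring
    rw [Nat.add_sub_cancel_left, pow_one, mul_assoc, coeff_X_pow_mul', hch]
    rw [if_pos (by omega), coeff_mul_C]
    by_cases hcase : n = q * (l' + 1) + q * q * M + 1
    · rw [if_pos hcase]
      have hidx : n - q * l' = q * q * M + q + 1 := by omega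
      rw [hidx]
      have hval : coeff (R := ZMod p) (q * q * M + q + 1) (w * V ^ q)
          = (coeff (R := ZMod p) (q * M + 1) w) ^ q := by
        rw [PowerSeries.coeff_mul]
        rw [Finset.sum_eq_single (1, q * q * M + q)]
        · rw [hw1, one_mul, hVqc, if_pos ⟨q * M + 1, by ring⟩]
          have : (q * q * M + q) / q = q * M + 1 := by
            rw [show q * q * M + q = q * (q * M + 1) by ring]
            exact Nat.mul_div_cancel_left _ (by omega)
          rw [this, hVdef, map_sub, coeff_X, if_neg ?_, sub_zero]
          have := Nat.mul_pos (show 0 < q by omega) (show 0 < M by omega)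
          omega
        · rintro ⟨c, d⟩ hcd hne
          rw [Finset.HasAntidiagonal.mem_antidiagonal] at hcd
          rcases lt_or_ge d (q * (q * M + 1)) with h | h
          · rw [hVq0 d h, mul_zero]
          · have hqq : q * (q * M + 1) = q * q * M + q := by ring
            have hd2 : d = q * q * M + q ∨ d = q * q * M + q + 1 := by omega
            rcases hd2 with h2 | h2
            · exfalso; apply hne; subst h2; simp at hcd ⊢; omega
            · have hc0 : c = 0 := by omega
              rw [hc0, hw0, zero_mul]
        · intro hmem
          exfalso; apply hmem
          rw [Finset.HasAntidiagonal.mem_antidiagonal]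
          omega
      rw [hval]
      ring
    · rw [if_neg hcase]
      have hz : coeff (R := ZMod p) (n - q * l') (w * V ^ q) = 0 := by
        apply coeff_mul_lt (A := 1) (B := q * (q * M + 1))
        · intro d hd
          have : d = 0 := by omega
          rw [this, hw0]
        · exact hVq0
        · have hqq : q * (q * M + 1) = q * q * M + q := by ring
          omega
      rw [hz, zero_mul]
  rw [htop, hmid]
  exact add_comm _ _

end Star

section CompA

variable {p : ℕ} [hp : Fact p.Prime]

/-- Generic lemma: coefficient of `psComp g w` for `n` below/at the critical index. -/
lemma compA (q r : ℕ) (hq : q = p ^ r) (hr : 1 ≤ r)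
    (w g : PowerSeries (ZMod p)) (M I : ℕ) (hM : 1 ≤ M) (hI : 1 ≤ I)
    (hw1 : coeff (R := ZMod p) 1 w = 1)
    (hW : ∀ d, d < q * M + 1 → d ≠ 1 → coeff (R := ZMod p) d w = 0)
    (hg1 : coeff (R := ZMod p) 1 g = 1)
    (hgsupp : ∀ k, k ≠ 1 → (¬ ∃ s, 1 ≤ s ∧ k = q * s + 1) → coeff (R := ZMod p) k g = 0)
    (hgdepth : ∀ s, 1 ≤ s → s < I → coeff (R := ZMod p) (q * s + 1) g = 0)
    (n : ℕ) (hnB : n ≤ q * I + q * q * M + 1) :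
    coeff (R := ZMod p) n (psComp g w) = coeff (R := ZMod p) (n + 1) (g * w) +
      (if n = q * I + q * q * M + 1 then
        (I : ZMod p) * coeff (R := ZMod p) (q * I + 1) g * (coeff (R := ZMod p) (q * M + 1) w) ^ q
      else 0) := by
  have hq2 : 2 ≤ q := by
    rw [hq]
    exact le_trans hp.out.two_le (Nat.le_self_pow (by omega) p)
  have hw0 : coeff (R := ZMod p) 0 w = 0 := hW 0 (by omega) (by omega)
  have hqI : 2 ≤ q * I := by
    calc 2 = 2 * 1 := by omega
      _ ≤ q * I := Nat.mul_le_mul hq2 hI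
  rw [coeff_psComp]
  have hstep : ∀ k ∈ Finset.range (n + 1),
      coeff (R := ZMod p) k g * coeff (R := ZMod p) n (w ^ k)
      = coeff (R := ZMod p) k g * coeff (R := ZMod p) (n + 1 - k) w +
        (if k = q * I + 1 then
          (if n = q * I + q * q * M + 1 then
            (I : ZMod p) * coeff (R := ZMod p) (q * I + 1) g * (coeff (R := ZMod p) (q * M + 1) w) ^ q
          else 0) else 0) := by
    intro k hk
    rw [Finset.mem_range] at hk
    by_cases hk1 : k = 1
    · subst hk1
      rw [pow_one, if_neg (by omega)]
      simp
    by_cases hks : ∃ s, 1 ≤ s ∧ k = q * s + 1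
    · obtain ⟨s, hs1, rfl⟩ := hks
      rcases lt_or_ge s I with hsI | hsI
      · rw [hgdepth s hs1 hsI, zero_mul, zero_mul, zero_add, if_neg]
        intro hc
        have h1 : q * s = q * I := by omega
        have : s = I := Nat.eq_of_mul_eq_mul_left (by omega) h1
        omega
      · have hsq : q * s ≤ q * I → s ≤ I := fun h => Nat.le_of_mul_le_mul_left h (by omega)
        have hqsI : q * I ≤ q * s := Nat.mul_le_mul_left q hsI
        rw [star q r hq hr w M hM hw1 hW s n hs1 (by omega) (by omega),
          show n + 1 - (q * s + 1) = n - q * s from by omega, mul_add]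
        congr 1
        by_cases hcs : n = q * s + q * q * M + 1
        · have hsI' : s = I := by
            have h1 : q * s ≤ q * I := by omega
            have := hsq h1
            omega
          subst hsI'
          rw [if_pos hcs]
          rw [if_pos rfl]
          rw [if_pos hcs]
          ring
        · rw [if_neg hcs, mul_zero]
          by_cases h1 : q * s + 1 = q * I + 1
          · rw [if_pos h1, if_neg]
            intro hc
            apply hcs
            have : q * s = q * I := by omega
            omega
          · rw [if_neg h1]
    · have hg0 : coeff (R := ZMod p) k g = 0 := hgsupp k hk1 hks
      rw [hg0, zero_mul, zero_mul, zero_add, if_neg]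
      intro hc
      exact hks ⟨I, hI, hc⟩
  rw [Finset.sum_congr rfl hstep, Finset.sum_add_distrib]
  congr 1
  · -- the plain sum equals the coefficient of the product
    rw [PowerSeries.coeff_mul, Finset.Nat.sum_antidiagonal_eq_sum_range_succ_mk]
    conv_rhs => rw [Finset.sum_range_succ]
    simp [hw0]
  · rw [Finset.sum_ite_eq' (Finset.range (n + 1)) (q * I + 1)]
    by_cases hT : n = q * I + q * q * M + 1
    · rw [if_pos (by rw [Finset.mem_range]; omega)]
    · rw [if_neg hT, ite_self]

end CompA

theorem stmt_9 (p r : ℕ) (hp : p.Prime) (hpodd : Odd p) (hr : 1 ≤ r) (q : ℕ) (hq : q = p ^ r)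
    (u v : PowerSeries (ZMod p)) (hu : InT p q u) (hv : InT p q v)
    (i j : ℕ) (hdu : HasDepth p q u i) (hdv : HasDepth p q v j)
    (hij : j < i) (hip : Nat.gcd i p = 1)
    -- u', v' are the compositional inverses of u, v
    (u' v' : PowerSeries (ZMod p))
    (hu' : psComp u u' = PowerSeries.X ∧ psComp u' u = PowerSeries.X)
    (hv' : psComp v v' = PowerSeries.X ∧ psComp v' v = PowerSeries.X) :
    -- the commutator [u,v] = u⁻¹ ∘ v⁻¹ ∘ u ∘ v has depth exactly qj + i
    HasDepth p q (psComp (psComp (psComp u' v') u) v) (q * j + i) := by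
  haveI : Fact p.Prime := ⟨hp⟩
  obtain ⟨hu1, husupp⟩ := hu
  obtain ⟨hv1, hvsupp⟩ := hv
  obtain ⟨hi1, ha, hudep⟩ := hdu
  obtain ⟨hj1, hb, hvdep⟩ := hdv
  have hq2 : 2 ≤ q := by
    rw [hq]
    exact le_trans hp.two_le (Nat.le_self_pow (by omega) p)
  -- constant coefficients
  have hu0 : constantCoeff (R := ZMod p) u = 0 := by
    rw [← coeff_zero_eq_constantCoeff_apply]
    exact husupp 0 (by omega) (by rintro ⟨k, _, hk2⟩; omega)
  have hv0 : constantCoeff (R := ZMod p) v = 0 := by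
    rw [← coeff_zero_eq_constantCoeff_apply]
    exact hvsupp 0 (by omega) (by rintro ⟨k, _, hk2⟩; omega)
  have hu'0 : constantCoeff (R := ZMod p) u' = 0 := by
    have := congrArg (constantCoeff (R := ZMod p)) hu'.2
    rwa [constantCoeff_psComp, constantCoeff_X] at this
  have hv'0 : constantCoeff (R := ZMod p) v' = 0 := by
    have := congrArg (constantCoeff (R := ZMod p)) hv'.2
    rwa [constantCoeff_psComp, constantCoeff_X] at this
  set c := psComp (psComp (psComp u' v') u) v with hc
  have hA0 : constantCoeff (R := ZMod p) (psComp u' v') = 0 := by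
    rw [constantCoeff_psComp, hu'0]
  have hAu0 : constantCoeff (R := ZMod p) (psComp (psComp u' v') u) = 0 := by
    rw [constantCoeff_psComp, hA0]
  have hc0 : constantCoeff (R := ZMod p) c = 0 := by
    rw [hc, constantCoeff_psComp, hAu0]
  have huv0 : constantCoeff (R := ZMod p) (psComp u v) = 0 := by
    rw [constantCoeff_psComp, hu0]
  -- the group identity  (v ∘ u) ∘ c = u ∘ v
  have hgrp : psComp (psComp v u) c = psComp u v := by
    rw [hc]
    rw [psComp_assoc v u _ hu0 (by rw [constantCoeff_psComp, hAu0])]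
    rw [← psComp_assoc u (psComp (psComp u' v') u) v hAu0 hv0]
    rw [← psComp_assoc u (psComp u' v') u hA0 hu0]
    rw [← psComp_assoc u u' v' hu'0 hv'0, hu'.1, psComp_X_left v' hv'0]
    rw [psComp_assoc v' u v hu0 hv0]
    rw [← psComp_assoc v v' (psComp u v) hv'0 huv0, hv'.1, psComp_X_left _ huv0]
  -- truncated-support hypotheses
  have hWv : ∀ d, d < q * j + 1 → d ≠ 1 → coeff (R := ZMod p) d v = 0 := by
    intro d hd h1
    by_cases hex : ∃ k, 1 ≤ k ∧ d = q * k + 1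
    · obtain ⟨k, hk1, rfl⟩ := hex
      apply hvdep k hk1
      have h2 : q * k < q * j := by omega
      exact lt_of_mul_lt_mul_left h2 (by omega)
    · exact hvsupp d h1 hex
  have hWu : ∀ d, d < q * i + 1 → d ≠ 1 → coeff (R := ZMod p) d u = 0 := by
    intro d hd h1
    by_cases hex : ∃ k, 1 ≤ k ∧ d = q * k + 1
    · obtain ⟨k, hk1, rfl⟩ := hex
      apply hudep k hk1
      have h2 : q * k < q * i := by omega
      exact lt_of_mul_lt_mul_left h2 (by omega)
    · exact husupp d h1 hex
  -- difference of the two compositions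
  have hineq : q * i + q * q * j + 1 < q * j + q * q * i + 1 := by
    have e1 : q * i = q * j + q * (i - j) := by
      rw [← Nat.mul_add]; congr 1; omega
    have e2 : q * q * i = q * q * j + q * q * (i - j) := by
      rw [← Nat.mul_add]; congr 1; omega
    have e3 : 2 * q ≤ q * q := Nat.mul_le_mul_right q hq2
    have e4 : q * (i - j) < q * q * (i - j) :=
      Nat.mul_lt_mul_of_lt_of_le (by omega) (le_refl (i - j)) (by omega)
    omega
  have hD : ∀ n, n ≤ q * i + q * q * j + 1 →
      coeff (R := ZMod p) n (psComp u v) = coeff (R := ZMod p) n (psComp v u) +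
        (if n = q * i + q * q * j + 1 then
          (i : ZMod p) * coeff (R := ZMod p) (q * i + 1) u * (coeff (R := ZMod p) (q * j + 1) v) ^ q
        else 0) := by
    intro n hn
    have h1 := compA q r hq hr v u j i hj1 hi1 hv1 hWv hu1 husupp hudep n hn
    have h2 := compA q r hq hr u v i j hi1 hj1 hu1 hWu hv1 hvsupp hvdep n (by omega)
    rw [if_neg (by omega)] at h2
    rw [h1, h2, add_zero, mul_comm v u]
  -- first coefficient of  v ∘ u
  have hF1 : coeff (R := ZMod p) 1 (psComp v u) = 1 := by
    rw [coeff_psComp, Finset.sum_range_succ, Finset.sum_range_succ, Finset.sum_range_zero,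
      pow_zero, pow_one]
    rw [← coeff_zero_eq_constantCoeff_apply] at hv0
    simp [hv1, hu1, hv0, PowerSeries.coeff_one]
  -- the key induction
  have key : ∀ n, n ≤ q * i + q * q * j + 1 →
      coeff (R := ZMod p) n c = coeff (R := ZMod p) n X +
        (if n = q * i + q * q * j + 1 then
          (i : ZMod p) * coeff (R := ZMod p) (q * i + 1) u * (coeff (R := ZMod p) (q * j + 1) v) ^ q
        else 0) := by
    have hqI : 2 ≤ q * i := by
      calc 2 = 2 * 1 := by omega
        _ ≤ q * i := Nat.mul_le_mul hq2 hi1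
    intro n
    induction n using Nat.strong_induction_on with
    | _ n IH =>
      intro hn
      rcases Nat.eq_zero_or_pos n with rfl | hn1
      · rw [if_neg (by omega), add_zero, coeff_zero_eq_constantCoeff_apply,
          coeff_zero_eq_constantCoeff_apply, hc0, constantCoeff_X]
      · have hεlow : ∀ d, d < n → coeff (R := ZMod p) d (c - X) = 0 := by
          intro d hd
          rw [map_sub, IH d hd (by omega), if_neg (by omega), add_zero, sub_self]
        have hid := congrArg (coeff (R := ZMod p) n) hgrp
        rw [coeff_psComp] at hid
        have hstep : ∀ k ∈ Finset.range (n + 1),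
            coeff (R := ZMod p) k (psComp v u) * coeff (R := ZMod p) n (c ^ k)
            = coeff (R := ZMod p) k (psComp v u) * coeff (R := ZMod p) n (X ^ k) +
              (if k = 1 then coeff (R := ZMod p) n (c - X) else 0) := by
          intro k hk
          rw [Finset.mem_range] at hk
          by_cases hk1 : k = 1
          · subst hk1
            rw [pow_one, pow_one, if_pos rfl, hF1, one_mul, one_mul, map_sub]
            ring
          by_cases hk0 : k = 0
          · subst hk0
            rw [pow_zero, pow_zero, if_neg (by omega), add_zero]
          · -- k ≥ 2
            have hk2 : 2 ≤ k := by omega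
            have hpow : coeff (R := ZMod p) n (c ^ k) = coeff (R := ZMod p) n (X ^ k) := by
              have hcsplit : c = X + (c - X) := by ring
              conv_lhs => rw [hcsplit]
              rw [add_pow, map_sum, Finset.sum_range_succ]
              have hlast : coeff (R := ZMod p) n (X ^ k * (c - X) ^ (k - k) * (k.choose k : PowerSeries (ZMod p)))
                  = coeff (R := ZMod p) n (X ^ k) := by
                rw [Nat.sub_self, pow_zero, mul_one, Nat.choose_self, Nat.cast_one, mul_one]
              rw [hlast, Finset.sum_eq_zero, zero_add]
              intro m hm
              rw [Finset.mem_range] at hm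
              rw [← map_natCast (C (R := ZMod p)) (k.choose m), mul_assoc, coeff_X_pow_mul']
              split_ifs with hmn
              · rw [coeff_mul_C]
                have hz : coeff (R := ZMod p) (n - m) ((c - X) ^ (k - m)) = 0 := by
                  apply coeff_pow_lt (c - X) hεlow
                  rcases Nat.eq_or_lt_of_le (show 1 ≤ k - m by omega) with h1 | h1
                  · have hmm : (k - m) * n = n := by rw [← h1, one_mul]
                    omega
                  · have h2 : 2 ≤ k - m := by omega
                    have := Nat.mul_le_mul_right n h2
                    omega
                rw [hz, zero_mul]
              · rfl
            rw [hpow, if_neg hk1, add_zero]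
        rw [Finset.sum_congr rfl hstep, Finset.sum_add_distrib] at hid
        have hXsum : ∑ k ∈ Finset.range (n + 1),
            coeff (R := ZMod p) k (psComp v u) * coeff (R := ZMod p) n (X ^ k)
            = coeff (R := ZMod p) n (psComp v u) := by
          rw [Finset.sum_eq_single n]
          · rw [coeff_X_pow, if_pos rfl, mul_one]
          · intro k _ hkn
            rw [coeff_X_pow, if_neg (Ne.symm hkn), mul_zero]
          · intro h; exfalso; apply h; rw [Finset.mem_range]; omega
        have hIsum : ∑ k ∈ Finset.range (n + 1),
            (if k = 1 then coeff (R := ZMod p) n (c - X) else 0) = coeff (R := ZMod p) n (c - X) := by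
          rw [Finset.sum_ite_eq' (Finset.range (n + 1)) 1]
          rw [if_pos (by rw [Finset.mem_range]; omega)]
        rw [hXsum, hIsum, hD n hn] at hid
        have hfin := add_left_cancel hid
        rw [map_sub, sub_eq_iff_eq_add] at hfin
        rw [hfin, add_comm]
  -- conclusion
  have hT : q * (q * j + i) + 1 = q * i + q * q * j + 1 := by ring
  have hqI : 2 ≤ q * i := by
    calc 2 = 2 * 1 := by omega
      _ ≤ q * i := Nat.mul_le_mul hq2 hi1
  refine ⟨by omega, ?_, ?_⟩
  · rw [hT, key _ le_rfl, if_pos rfl, coeff_X, if_neg (by omega), zero_add]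
    have hi0 : (i : ZMod p) ≠ 0 := by
      intro h
      rw [ZMod.natCast_eq_zero_iff] at h
      have hdvd : p ∣ Nat.gcd i p := Nat.dvd_gcd h dvd_rfl
      rw [hip] at hdvd
      have h2 := Nat.le_of_dvd one_pos hdvd
      have h3 := hp.two_le
      omega
    exact mul_ne_zero (mul_ne_zero hi0 ha) (pow_ne_zero q hb)
  · intro l hl1 hl2
    have hb1 : q * l ≤ q * (q * j + i) := Nat.mul_le_mul_left q (le_of_lt hl2)
    have he : q * (q * j + i) = q * i + q * q * j := by ring
    have hql : 0 < q * l := Nat.mul_pos (by omega) (by omega)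
    rw [key (q * l + 1) (by omega), coeff_X, if_neg (by omega), if_neg, zero_add]
    intro hcontra
    have h1 : q * l = q * (q * j + i) := by omega
    have h2 : l = q * j + i := Nat.eq_of_mul_eq_mul_left (by omega) h1
    omega
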